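/- Let G = {g_1 = e, ..., g_n} be a finite group, R a commutative ring (or C), and a : G → R a function. Let A be the n×n matrix with entries A_{ij} = a(g_i·g_j^{-1}). Then A = F*·Λ·F, where F is the unitary matrix formed from the matrix entries of the irreducible unitary representations (rows indexed by triples (k,i,j), with entry √(n_k/n)·φ^k_{ij}(g_l)), and Λ is block diagonal: Λ = diag[Λ_1,...,Λ_s] with Λ_k = diag[λ_k,...,λ_k] (n_k copies), where λ_k = Σ_{g∈G} a(g)·Φ_k(g) is an n_k×n_k matrix. -/

import Mathlib

open Matrix Finset


namespace Stmt4Aux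

variable {G : Type*} [Group G] [Fintype G]

lemma phi_inv {N : ℕ} (Φ : G →* Matrix (Fin N) (Fin N) ℂ)
    (hu : ∀ g, Φ g ∈ Matrix.unitaryGroup (Fin N) ℂ) (g : G) :
    Φ g⁻¹ = (Φ g)ᴴ := by
  have h1 : Φ g * (Φ g)ᴴ = 1 := Matrix.mem_unitaryGroup_iff.mp (hu g)
  calc Φ g⁻¹ = Φ g⁻¹ * (Φ g * (Φ g)ᴴ) := by rw [h1, mul_one]
    _ = (Φ g⁻¹ * Φ g) * (Φ g)ᴴ := by rw [mul_assoc]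
    _ = (Φ g)ᴴ := by rw [← _root_.map_mul, inv_mul_cancel, _root_.map_one, one_mul]

lemma twist {Nk Nm : ℕ} (Φk : G →* Matrix (Fin Nk) (Fin Nk) ℂ)
    (Φm : G →* Matrix (Fin Nm) (Fin Nm) ℂ) (X : Matrix (Fin Nk) (Fin Nm) ℂ) (h : G) :
    Φk h * (∑ g : G, Φk g * X * Φm g⁻¹) = (∑ g : G, Φk g * X * Φm g⁻¹) * Φm h := by
  rw [Matrix.mul_sum, Matrix.sum_mul]
  refine Fintype.sum_equiv (Equiv.mulLeft h) _ _ fun g => ?_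
  simp only [Equiv.coe_mulLeft]
  have e1 : Φm (h * g)⁻¹ * Φm h = Φm g⁻¹ := by
    rw [← _root_.map_mul]; congr 1; group
  rw [Matrix.mul_assoc (Φk (h * g) * X), e1, _root_.map_mul, Matrix.mul_assoc, Matrix.mul_assoc,
    Matrix.mul_assoc]

lemma sandwich {Nk Nm : ℕ} (A : Matrix (Fin Nk) (Fin Nk) ℂ) (B : Matrix (Fin Nm) (Fin Nm) ℂ)
    (i j : Fin Nk) (i' j' : Fin Nm) :
    (A * Matrix.single j j' (1:ℂ) * B) i i' = A i j * B j' i' := by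
  simp [Matrix.mul_apply, Matrix.single, ite_and, Finset.sum_mul, ite_mul]

lemma schur_ne {Nk Nm : ℕ} (Φk : G →* Matrix (Fin Nk) (Fin Nk) ℂ)
    (Φm : G →* Matrix (Fin Nm) (Fin Nm) ℂ)
    (hum : ∀ g, Φm g ∈ Matrix.unitaryGroup (Fin Nm) ℂ)
    (key : ∀ T : Matrix (Fin Nk) (Fin Nm) ℂ, (∀ g, Φk g * T = T * Φm g) → T = 0)
    (i j : Fin Nk) (i' j' : Fin Nm) :
    ∑ g : G, Φk g i j * (starRingEnd ℂ) (Φm g i' j') = 0 := by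
  have h0 := key (∑ g : G, Φk g * Matrix.single j j' 1 * Φm g⁻¹) (twist Φk Φm _)
  have h1 := congrFun (congrFun h0 i) i'
  rw [Matrix.sum_apply] at h1
  simp only [sandwich, Matrix.zero_apply] at h1
  rw [← h1]
  refine Finset.sum_congr rfl fun g _ => ?_
  rw [phi_inv Φm hum, Matrix.conjTranspose_apply]
  rfl

lemma comm_scalar {N : ℕ} (hN : N ≠ 0) (Φk : G →* Matrix (Fin N) (Fin N) ℂ)
    (hirr : ∀ U : Submodule ℂ (Fin N → ℂ), (∀ g, ∀ v ∈ U, (Φk g).mulVec v ∈ U) → U = ⊥ ∨ U = ⊤)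
    (T : Matrix (Fin N) (Fin N) ℂ) (hT : ∀ g, Φk g * T = T * Φk g) :
    ∃ c : ℂ, T = c • (1 : Matrix (Fin N) (Fin N) ℂ) := by
  haveI : NeZero N := ⟨hN⟩
  set f : Module.End ℂ (Fin N → ℂ) := Matrix.mulVecLin T with hf
  obtain ⟨c, hc⟩ := Module.End.exists_eigenvalue f
  refine ⟨c, ?_⟩
  have hinv : ∀ g, ∀ v ∈ f.eigenspace c, (Φk g).mulVec v ∈ f.eigenspace c := by
    intro g v hv
    rw [Module.End.mem_eigenspace_iff] at hv ⊢
    show T.mulVec ((Φk g).mulVec v) = c • (Φk g).mulVec v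
    rw [Matrix.mulVec_mulVec, ← hT, ← Matrix.mulVec_mulVec]
    show (Φk g).mulVec (f v) = _
    rw [hv, Matrix.mulVec_smul]
  have hU : f.eigenspace c = ⊤ := by
    rcases hirr (f.eigenspace c) hinv with h | h
    · exact absurd h hc
    · exact h
  have hv : ∀ v, T.mulVec v = c • v := by
    intro v
    have hm : v ∈ f.eigenspace c := hU ▸ Submodule.mem_top
    rwa [Module.End.mem_eigenspace_iff] at hm
  ext i j
  have h2 := congrFun (hv (Pi.single j 1)) i
  rw [Matrix.mulVec_single] at h2
  simp only [MulOpposite.op_one, one_smul, Matrix.col_apply] at h2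
  rw [h2]
  simp [Matrix.one_apply, Pi.single_apply, eq_comm]

lemma schur_eq {N : ℕ} (Φk : G →* Matrix (Fin N) (Fin N) ℂ)
    (hu : ∀ g, Φk g ∈ Matrix.unitaryGroup (Fin N) ℂ)
    (hirr : ∀ U : Submodule ℂ (Fin N → ℂ), (∀ g, ∀ v ∈ U, (Φk g).mulVec v ∈ U) → U = ⊥ ∨ U = ⊤)
    (i j i' j' : Fin N) :
    ∑ g : G, Φk g i j * (starRingEnd ℂ) (Φk g i' j') =
      if i = i' ∧ j = j' then (Fintype.card G : ℂ) / N else 0 := by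
  have hN : N ≠ 0 := i.pos.ne'
  set X : Matrix (Fin N) (Fin N) ℂ := Matrix.single j j' 1 with hX
  set T : Matrix (Fin N) (Fin N) ℂ := ∑ g : G, Φk g * X * Φk g⁻¹ with hTdef
  obtain ⟨c, hc⟩ := comm_scalar hN Φk hirr T (twist Φk Φk X)
  have htr1 : T.trace = c * N := by
    rw [hc, Matrix.trace_smul, Matrix.trace_one]
    simp [Fintype.card_fin, smul_eq_mul]
  have htr2 : T.trace = (Fintype.card G : ℂ) * (if j = j' then 1 else 0) := by
    rw [hTdef, Matrix.trace_sum]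
    have : ∀ g : G, (Φk g * X * Φk g⁻¹).trace = (if j = j' then (1:ℂ) else 0) := by
      intro g
      rw [Matrix.trace_mul_cycle, ← _root_.map_mul, inv_mul_cancel, _root_.map_one, one_mul]
      by_cases hjj : j = j'
      · subst hjj; simp [hX]
      · simp [hX, Matrix.trace_single_eq_of_ne (i := j) (j := j') (c := (1:ℂ)) hjj, hjj]
    simp [this, Finset.sum_const, mul_comm]
  have hTe : T i i' = c * (if i = i' then 1 else 0) := by
    rw [hc]
    simp [Matrix.one_apply]
  have hsum : ∑ g : G, Φk g i j * (starRingEnd ℂ) (Φk g i' j') = T i i' := by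
    rw [hTdef, Matrix.sum_apply]
    refine Finset.sum_congr rfl fun g _ => ?_
    rw [hX, sandwich, phi_inv Φk hu, Matrix.conjTranspose_apply]
    rfl
  rw [hsum, hTe]
  have hcval : c * N = (Fintype.card G : ℂ) * (if j = j' then 1 else 0) := by
    rw [← htr1, htr2]
  have hNne : (N : ℂ) ≠ 0 := Nat.cast_ne_zero.mpr hN
  by_cases hjj : j = j'
  · subst hjj
    simp only [if_true, mul_one] at hcval
    have hcc : c = (Fintype.card G : ℂ) / N := by field_simp [hNne] at hcval ⊢; linear_combination hcval
    by_cases hii : i = i'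
    · subst hii; simp [hcc]
    · simp [hii]
  · have hc0 : c = 0 := by
      simp only [hjj, if_false, mul_zero] at hcval
      exact (mul_eq_zero.mp hcval).resolve_right hNne
    simp [hc0, hjj]

end Stmt4Aux

lemma tr3 {p : ℕ} (A B C : Matrix (Fin p) (Fin p) ℂ) :
    ∑ i, ∑ j, ∑ i', A j i * B i i' * C i' j = (A * B * C).trace := by
  have h : (A * B * C).trace = ∑ j, ∑ i', ∑ i, A j i * B i i' * C i' j := by
    simp only [Matrix.trace, Matrix.diag_apply, Matrix.mul_apply, Finset.sum_mul]
  rw [h, Finset.sum_comm]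
  exact Finset.sum_congr rfl fun j _ => Finset.sum_comm

lemma sum_swap4 {ι₁ ι₂ ι₃ ι₄ : Type*} [Fintype ι₁] [Fintype ι₂] [Fintype ι₃] [Fintype ι₄]
    (f : ι₁ → ι₂ → ι₃ → ι₄ → ℂ) :
    ∑ i, ∑ j, ∑ l, ∑ x, f i j l x = ∑ x, ∑ i, ∑ j, ∑ l, f i j l x := by
  calc ∑ i, ∑ j, ∑ l, ∑ x, f i j l x
      = ∑ i, ∑ j, ∑ x, ∑ l, f i j l x :=
        Finset.sum_congr rfl fun i _ => Finset.sum_congr rfl fun j _ => Finset.sum_comm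
    _ = ∑ i, ∑ x, ∑ j, ∑ l, f i j l x :=
        Finset.sum_congr rfl fun i _ => Finset.sum_comm
    _ = ∑ x, ∑ i, ∑ j, ∑ l, f i j l x := Finset.sum_comm

open Stmt4Aux

theorem stmt4 {G : Type*} [Group G] [Fintype G] (s : ℕ) (n : Fin s → ℕ)
    (Φ : (k : Fin s) → G →* Matrix (Fin (n k)) (Fin (n k)) ℂ)
    (hunit : ∀ k g, Φ k g ∈ Matrix.unitaryGroup (Fin (n k)) ℂ)
    (hirr : ∀ k, ∀ U : Submodule ℂ (Fin (n k) → ℂ),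
      (∀ g, ∀ v ∈ U, (Φ k g).mulVec v ∈ U) → U = ⊥ ∨ U = ⊤)
    (hineq : ∀ k m, k ≠ m → ∀ T : Matrix (Fin (n k)) (Fin (n m)) ℂ,
      (∀ g, Φ k g * T = T * Φ m g) → T = 0)
    (hcomplete : ∑ k, (n k) ^ 2 = Fintype.card G)
    (a : G → ℂ)
    (F : Matrix (Σ k : Fin s, Fin (n k) × Fin (n k)) G ℂ)
    (hF : ∀ (k : Fin s) (i j : Fin (n k)) (g : G),
      F ⟨k, (i, j)⟩ g =
        (1 / Real.sqrt (Fintype.card G) : ℂ) * (Real.sqrt (n k) : ℂ) * Φ k g i j) :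
    Matrix.of (fun g h : G => a (g * h⁻¹)) =
      F.conjTranspose *
        Matrix.blockDiagonal'
          (fun k => Matrix.blockDiagonal (fun _ : Fin (n k) => ∑ g : G, a g • Φ k g)) *
        F := by
  classical
  have cardpos : 0 < Fintype.card G := Fintype.card_pos
  have hNc : (Fintype.card G : ℂ) ≠ 0 := Nat.cast_ne_zero.mpr cardpos.ne'
  set c : Fin s → ℂ := fun k => (1 / Real.sqrt (Fintype.card G) : ℂ) * (Real.sqrt (n k) : ℂ)
    with hcdef
  have hstarc : ∀ k, (starRingEnd ℂ) (c k) = c k := by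
    intro k
    simp [hcdef, map_div₀, Complex.conj_ofReal]
  have hc2 : ∀ k, c k * c k = (n k : ℂ) / (Fintype.card G : ℂ) := by
    intro k
    have h1 : (Real.sqrt (n k) : ℂ) * (Real.sqrt (n k) : ℂ) = (n k : ℂ) := by
      rw [← Complex.ofReal_mul, Real.mul_self_sqrt (Nat.cast_nonneg _)]
      norm_cast
    have h2 : (Real.sqrt (Fintype.card G) : ℂ) * (Real.sqrt (Fintype.card G) : ℂ)
        = (Fintype.card G : ℂ) := by
      rw [← Complex.ofReal_mul, Real.mul_self_sqrt (Nat.cast_nonneg _)]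
      norm_cast
    have h3 : c k * c k = ((Real.sqrt (n k) : ℂ) * (Real.sqrt (n k) : ℂ)) /
        ((Real.sqrt (Fintype.card G) : ℂ) * (Real.sqrt (Fintype.card G) : ℂ)) := by
      rw [hcdef]; ring
    rw [h3, h1, h2]
  -- F is unitary
  have hFFH : F * F.conjTranspose = 1 := by
    ext ⟨k, i, j⟩ ⟨m, i', j'⟩
    rw [Matrix.mul_apply]
    have hterm : ∀ g : G, F ⟨k, (i, j)⟩ g * F.conjTranspose g ⟨m, (i', j')⟩
        = (c k * c m) * (Φ k g i j * (starRingEnd ℂ) (Φ m g i' j')) := by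
      intro g
      rw [Matrix.conjTranspose_apply, hF, hF]
      simp only [hcdef, star_mul', Complex.star_def, map_div₀, _root_.map_one, Complex.conj_ofReal]
      ring
    rw [Finset.sum_congr rfl (fun g _ => hterm g), ← Finset.mul_sum]
    by_cases hkm : k = m
    · subst hkm
      rw [schur_eq (Φ k) (hunit k) (hirr k) i j i' j', hc2 k]
      by_cases hij : i = i' ∧ j = j'
      · obtain ⟨rfl, rfl⟩ := hij
        have hnk : (n k : ℂ) ≠ 0 := Nat.cast_ne_zero.mpr i.pos.ne'
        rw [if_pos ⟨rfl, rfl⟩, Matrix.one_apply_eq]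
        field_simp
      · rw [if_neg hij, mul_zero, Matrix.one_apply_ne]
        intro hcon
        apply hij
        have := Sigma.mk.inj_iff.mp hcon
        obtain ⟨-, hp⟩ := this
        have hp' : ((i, j) : Fin (n k) × Fin (n k)) = (i', j') := eq_of_heq hp
        exact ⟨(Prod.mk.injEq _ _ _ _).mp hp' |>.1, (Prod.mk.injEq _ _ _ _).mp hp' |>.2⟩
    · rw [schur_ne (Φ k) (Φ m) (hunit m) (hineq k m hkm) i j i' j', mul_zero]
      rw [Matrix.one_apply_ne]
      intro hcon
      exact hkm (congrArg Sigma.fst hcon)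
  have card_eq : Fintype.card ((k : Fin s) × (Fin (n k) × Fin (n k))) = Fintype.card G := by
    simp [Fintype.card_sigma, ← hcomplete, sq]
  have hFHF : F.conjTranspose * F = 1 :=
    (Matrix.mul_eq_one_comm_of_equiv (Fintype.equivOfCardEq card_eq)).mp hFFH
  -- character column orthogonality
  have hchar : ∀ y : G, ∑ k : Fin s, (n k : ℂ) * (Φ k y).trace
      = if y = 1 then (Fintype.card G : ℂ) else 0 := by
    intro y
    have h1 := congrFun (congrFun hFHF 1) y
    rw [Matrix.mul_apply, ← Finset.univ_sigma_univ, Finset.sum_sigma] at h1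
    have h2 : ∀ k : Fin s, ∑ p : Fin (n k) × Fin (n k),
        F.conjTranspose 1 ⟨k, p⟩ * F ⟨k, p⟩ y
        = ((n k : ℂ) / (Fintype.card G : ℂ)) * (Φ k y).trace := by
      intro k
      rw [Fintype.sum_prod_type]
      have e : ∀ i j : Fin (n k), F.conjTranspose 1 ⟨k, (i, j)⟩ * F ⟨k, (i, j)⟩ y
          = (c k * c k) * ((if i = j then 1 else 0) * Φ k y i j) := by
        intro i j
        rw [Matrix.conjTranspose_apply, hF, hF, _root_.map_one (Φ k)]
        rw [show ((1 / Real.sqrt (Fintype.card G) : ℂ) * (Real.sqrt (n k) : ℂ)) = c k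
          from by rw [hcdef]]
        rw [star_mul', Matrix.one_apply]
        rw [show star (if i = j then (1:ℂ) else 0) = (if i = j then (1:ℂ) else 0)
          from by split <;> simp]
        rw [Complex.star_def, hstarc]
        ring
      simp only [e, ← Finset.mul_sum]
      rw [← hc2 k]
      congr 1
      rw [Matrix.trace]
      refine Finset.sum_congr rfl fun i _ => ?_
      simp [ite_mul, Matrix.diag_apply]
    rw [Finset.sum_congr rfl (fun k _ => h2 k)] at h1
    have h3 : (1 : Matrix G G ℂ) 1 y = if y = 1 then 1 else 0 := by
      rw [Matrix.one_apply]
      simp [eq_comm]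
    rw [h3] at h1
    calc ∑ k : Fin s, (n k : ℂ) * (Φ k y).trace
        = (Fintype.card G : ℂ) *
          ∑ k : Fin s, ((n k : ℂ) / (Fintype.card G : ℂ)) * (Φ k y).trace := by
          rw [Finset.mul_sum]
          refine Finset.sum_congr rfl fun k _ => ?_
          field_simp
      _ = (Fintype.card G : ℂ) * (if y = 1 then 1 else 0) := by rw [h1]
      _ = if y = 1 then (Fintype.card G : ℂ) else 0 := by split <;> simp
  -- entry of the scalar block matrix
  have hLapp : ∀ (k : Fin s) (i i' : Fin (n k)),
      (∑ x : G, a x • Φ k x) i i' = ∑ x : G, a x * Φ k x i i' := by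
    intro k i i'
    rw [Matrix.sum_apply]
    exact Finset.sum_congr rfl fun x _ => rfl
  have hinner : ∀ (h : G) (k : Fin s) (i j : Fin (n k)),
      (∑ r' : (m : Fin s) × (Fin (n m) × Fin (n m)),
        (Matrix.blockDiagonal'
          (fun m => Matrix.blockDiagonal (fun _ : Fin (n m) => ∑ x : G, a x • Φ m x)))
            ⟨k, (i, j)⟩ r' * F r' h)
      = ∑ i' : Fin (n k), (∑ x : G, a x • Φ k x) i i' * F ⟨k, (i', j)⟩ h := by
    intro h k i j
    rw [← Finset.univ_sigma_univ, Finset.sum_sigma]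
    rw [Finset.sum_eq_single k]
    · rw [Fintype.sum_prod_type]
      refine Finset.sum_congr rfl fun i' _ => ?_
      have e2 : ∀ j' : Fin (n k),
          (Matrix.blockDiagonal' (fun m => Matrix.blockDiagonal
            (fun _ : Fin (n m) => ∑ x : G, a x • Φ m x))) ⟨k, (i, j)⟩ ⟨k, (i', j')⟩
          = if j = j' then (∑ x : G, a x • Φ k x) i i' else 0 := by
        intro j'
        rw [Matrix.blockDiagonal'_apply_eq, Matrix.blockDiagonal_apply]
      simp only [e2, ite_mul, zero_mul]
      rw [Finset.sum_ite_eq]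
      simp
    · intro m _ hm
      apply Finset.sum_eq_zero
      intro p _
      rw [Matrix.blockDiagonal'_apply_ne _ _ _ (Ne.symm hm), zero_mul]
    · simp
  have main : ∀ g h : G,
      (F.conjTranspose * (Matrix.blockDiagonal' (fun k => Matrix.blockDiagonal
        (fun _ : Fin (n k) => ∑ x : G, a x • Φ k x)) * F)) g h = a (g * h⁻¹) := by
    intro g h
    rw [Matrix.mul_apply]
    have e3 : ∀ r : (k : Fin s) × (Fin (n k) × Fin (n k)),
        F.conjTranspose g r * (Matrix.blockDiagonal' (fun k => Matrix.blockDiagonal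
          (fun _ : Fin (n k) => ∑ x : G, a x • Φ k x)) * F) r h
        = (starRingEnd ℂ) (F r g) *
            ∑ i' : Fin (n r.1), (∑ x : G, a x • Φ r.1 x) r.2.1 i' * F ⟨r.1, (i', r.2.2)⟩ h := by
      rintro ⟨k, i, j⟩
      rw [Matrix.conjTranspose_apply, Matrix.mul_apply, hinner h k i j]
      rfl
    rw [Finset.sum_congr rfl fun r _ => e3 r]
    rw [← Finset.univ_sigma_univ, Finset.sum_sigma]
    have e4 : ∀ k : Fin s, (∑ p : Fin (n k) × Fin (n k), (starRingEnd ℂ) (F ⟨k, p⟩ g) *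
          ∑ i' : Fin (n k), (∑ x : G, a x • Φ k x) p.1 i' * F ⟨k, (i', p.2)⟩ h)
        = ((n k : ℂ) / (Fintype.card G : ℂ)) *
            ∑ x : G, a x * (Φ k (g⁻¹ * x * h)).trace := by
      intro k
      rw [Fintype.sum_prod_type]
      have e5 : ∀ (i j : Fin (n k)), (starRingEnd ℂ) (F ⟨k, (i, j)⟩ g) *
            ∑ i' : Fin (n k), (∑ x : G, a x • Φ k x) i i' * F ⟨k, (i', j)⟩ h
          = ∑ i' : Fin (n k), ∑ x : G,
              (c k * c k * a x) * (Φ k g⁻¹ j i * Φ k x i i' * Φ k h i' j) := by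
        intro i j
        rw [Finset.mul_sum]
        refine Finset.sum_congr rfl fun i' _ => ?_
        rw [hLapp, Finset.sum_mul, Finset.mul_sum]
        refine Finset.sum_congr rfl fun x _ => ?_
        rw [hF, hF]
        rw [show ((1 / Real.sqrt (Fintype.card G) : ℂ) * (Real.sqrt (n k) : ℂ)) = c k
          from by rw [hcdef]]
        rw [_root_.map_mul, hstarc]
        rw [show (starRingEnd ℂ) (Φ k g i j) = Φ k g⁻¹ j i from by
          rw [phi_inv (Φ k) (hunit k), Matrix.conjTranspose_apply]; rfl]
        ring
      simp only [e5]
      rw [sum_swap4 (fun i j i' x =>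
        (c k * c k * a x) * (Φ k g⁻¹ j i * Φ k x i i' * Φ k h i' j))]
      rw [Finset.mul_sum]
      refine Finset.sum_congr rfl fun x _ => ?_
      rw [show (∑ i, ∑ j, ∑ i', (c k * c k * a x) *
            (Φ k g⁻¹ j i * Φ k x i i' * Φ k h i' j))
          = (c k * c k * a x) *
            ∑ i, ∑ j, ∑ i', Φ k g⁻¹ j i * Φ k x i i' * Φ k h i' j from by
        simp only [← Finset.mul_sum]]
      rw [tr3 (Φ k g⁻¹) (Φ k x) (Φ k h), ← _root_.map_mul, ← _root_.map_mul, hc2 k]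
      ring
    rw [Finset.sum_congr rfl fun k _ => e4 k]
    have e6 : ∀ k : Fin s, ((n k : ℂ) / (Fintype.card G : ℂ)) *
          ∑ x : G, a x * (Φ k (g⁻¹ * x * h)).trace
        = ∑ x : G, a x *
            (((n k : ℂ) * (Φ k (g⁻¹ * x * h)).trace) / (Fintype.card G : ℂ)) := by
      intro k
      rw [Finset.mul_sum]
      exact Finset.sum_congr rfl fun x _ => by ring
    rw [Finset.sum_congr rfl fun k _ => e6 k, Finset.sum_comm]
    have e7 : ∀ x : G, (∑ k : Fin s, a x *
          (((n k : ℂ) * (Φ k (g⁻¹ * x * h)).trace) / (Fintype.card G : ℂ)))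
        = a x * ((if g⁻¹ * x * h = 1 then (Fintype.card G : ℂ) else 0) /
            (Fintype.card G : ℂ)) := by
      intro x
      rw [← hchar (g⁻¹ * x * h)]
      conv_rhs => rw [Finset.sum_div, Finset.mul_sum]
    rw [Finset.sum_congr rfl fun x _ => e7 x]
    rw [Finset.sum_eq_single (g * h⁻¹)]
    · rw [if_pos (by group), div_self hNc, mul_one]
    · intro x _ hx
      rw [if_neg, zero_div, mul_zero]
      intro hcon
      apply hx
      calc x = g * (g⁻¹ * x * h) * h⁻¹ := by group
        _ = g * 1 * h⁻¹ := by rw [hcon]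
        _ = g * h⁻¹ := by group
    · simp
  ext g h
  rw [Matrix.mul_assoc]
  exact (main g h).symm
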